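/- Let V be a finite-dimensional real inner product space, let G be a finite group acting on V by orthogonal linear transformations such that the only vector fixed by all elements of G is 0. Fix p ∈ (0,1) and orthogonal transformations P_1, ..., P_k arising from group elements g_1, ..., g_k that generate G. Set R_i = (1-p)·I + p·P_i. Then the linear transformation I - R_1⋯R_k is invertible. -/
import Mathlib


open RealInnerProductSpace

theorem stmt1 {V : Type*} [NormedAddCommGroup V] [InnerProductSpace ℝ V]
    [FiniteDimensional ℝ V] {G : Type*} [Group G] [Finite G]
    (ρ : Representation ℝ G V)
    (horth : ∀ g : G, ∀ x y : V, ⟪ρ g x, ρ g y⟫ = ⟪x, y⟫)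
    (hfix : ∀ v : V, (∀ g : G, ρ g v = v) → v = 0)
    {k : ℕ} (g : Fin k → G) (hgen : Subgroup.closure (Set.range g) = ⊤)
    {p : ℝ} (hp : p ∈ Set.Ioo (0:ℝ) 1)
    (R : Fin k → Module.End ℝ V)
    (hR : ∀ i, R i = (1 - p) • (1 : Module.End ℝ V) + p • ρ (g i)) :
    IsUnit ((1 : Module.End ℝ V) - (List.ofFn R).prod) := by
  obtain ⟨hp0, hp1⟩ := hp
  have hnorm : ∀ (h : G) (x : V), ‖ρ h x‖ = ‖x‖ := by
    intro h x
    have := horth h x x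
    rw [real_inner_self_eq_norm_sq, real_inner_self_eq_norm_sq] at this
    nlinarith [norm_nonneg (ρ h x), norm_nonneg x]
  have hle : ∀ i x, ‖R i x‖ ≤ ‖x‖ := by
    intro i x
    rw [hR i]
    simp only [LinearMap.add_apply, LinearMap.smul_apply, Module.End.one_apply]
    calc ‖(1-p) • x + p • ρ (g i) x‖ ≤ ‖(1-p) • x‖ + ‖p • ρ (g i) x‖ := norm_add_le _ _
    _ = (1-p) * ‖x‖ + p * ‖x‖ := by
        rw [norm_smul, norm_smul, hnorm, Real.norm_eq_abs, Real.norm_eq_abs,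
          abs_of_pos hp0, abs_of_pos (by linarith : (0:ℝ) < 1 - p)]
    _ = ‖x‖ := by ring
  have heqρ : ∀ i x, ‖R i x‖ = ‖x‖ → ρ (g i) x = x := by
    intro i x hx
    have h1 : ‖(1-p) • x + p • ρ (g i) x‖ = ‖x‖ := by
      rw [hR i] at hx
      simpa using hx
    have h2 := norm_add_sq_real ((1-p) • x) (p • ρ (g i) x)
    rw [h1] at h2
    have hip : ⟪(1-p) • x, p • ρ (g i) x⟫ = (1-p) * (p * ⟪x, ρ (g i) x⟫) := by
      rw [real_inner_smul_left, real_inner_smul_right]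
    have hn1 : ‖(1-p) • x‖ = (1-p) * ‖x‖ := by
      rw [norm_smul, Real.norm_eq_abs, abs_of_pos (by linarith : (0:ℝ) < 1 - p)]
    have hn2 : ‖p • ρ (g i) x‖ = p * ‖x‖ := by
      rw [norm_smul, hnorm, Real.norm_eq_abs, abs_of_pos hp0]
    rw [hip, hn1, hn2] at h2
    have hinner : ⟪x, ρ (g i) x⟫ = ‖x‖^2 := by nlinarith [mul_pos hp0 (show (0:ℝ) < 1 - p by linarith)]
    have hz : ‖ρ (g i) x - x‖^2 = 0 := by
      rw [norm_sub_sq_real, hnorm, real_inner_comm, hinner]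
      ring
    have : ρ (g i) x - x = 0 := by
      have := pow_eq_zero_iff (n := 2) (by norm_num) |>.mp hz
      exact norm_eq_zero.mp this
    exact sub_eq_zero.mp this
  have heqR : ∀ i x, ‖R i x‖ = ‖x‖ → R i x = x := by
    intro i x hx
    rw [hR i]
    simp only [LinearMap.add_apply, LinearMap.smul_apply, Module.End.one_apply,
      heqρ i x hx]
    module
  have hprodle : ∀ (l : List (Fin k)) (x : V), ‖((l.map R).prod) x‖ ≤ ‖x‖ := by
    intro l
    induction l with
    | nil => intro x; simp
    | cons i t ih =>
      intro x
      simp only [List.map_cons, List.prod_cons, Module.End.mul_apply]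
      exact le_trans (hle i _) (ih x)
  have hkey : ∀ (l : List (Fin k)) (v : V), ((l.map R).prod) v = v →
      ∀ i ∈ l, ρ (g i) v = v := by
    intro l
    induction l with
    | nil => simp
    | cons i t ih =>
      intro v hv j hj
      simp only [List.map_cons, List.prod_cons, Module.End.mul_apply] at hv
      set u := ((t.map R).prod) v with hu
      have h1 : ‖u‖ ≤ ‖v‖ := hprodle t v
      have h2 : ‖R i u‖ = ‖v‖ := by rw [hv]
      have h3 : ‖R i u‖ = ‖u‖ := le_antisymm (hle i u) (by rw [h2]; exact h1)
      have h4 : R i u = u := heqR i u h3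
      have h5 : u = v := by rw [← hv, h4]
      rcases List.mem_cons.mp hj with rfl | hjt
      · have h3' : ‖R j v‖ = ‖v‖ := by rw [h5] at h3; exact h3
        exact heqρ j v h3'
      · exact ih v (by rw [← hu, h5]) j hjt
  rw [LinearMap.isUnit_iff_ker_eq_bot, LinearMap.ker_eq_bot']
  intro v hv
  have hv' : ((List.ofFn R).prod) v = v := by
    have h0 : v - (List.ofFn R).prod v = 0 := by
      simpa [LinearMap.sub_apply] using hv
    exact (sub_eq_zero.mp h0).symm
  have hfixi : ∀ i : Fin k, ρ (g i) v = v := by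
    intro i
    have := hkey (List.finRange k) v (by rwa [← List.ofFn_eq_map]) i (List.mem_finRange i)
    exact this
  have hall : ∀ h : G, ρ h v = v := by
    let H : Subgroup G :=
      { carrier := {h | ρ h v = v}
        one_mem' := by simp [Set.mem_setOf_eq, map_one]
        mul_mem' := by
          intro a b ha hb
          simp only [Set.mem_setOf_eq] at *
          rw [map_mul, Module.End.mul_apply, hb, ha]
        inv_mem' := by
          intro a ha
          simp only [Set.mem_setOf_eq] at *
          conv_lhs => rw [← ha]
          rw [← Module.End.mul_apply, ← map_mul, inv_mul_cancel, map_one,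
            Module.End.one_apply] }
    have hle' : Subgroup.closure (Set.range g) ≤ H :=
      (Subgroup.closure_le H).mpr (by rintro _ ⟨i, rfl⟩; exact hfixi i)
    rw [hgen] at hle'
    intro h
    exact hle' (Subgroup.mem_top h)
  exact hfix v hall
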